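/- If m, n ≥ 48 and not both m and n are divisible by 7, then there is no 6-L(2,1)-labeling of the strong product C_m ⊠ C_n; hence λ(C_m ⊠ C_n) ≥ 7. -/
import Mathlib
set_option synthInstance.maxSize 5000
set_option maxHeartbeats 4000000

def far (a b : Fin 7) : Prop := a.val + 2 ≤ b.val ∨ b.val + 2 ≤ a.val

instance (a b : Fin 7) : Decidable (far a b) := by unfold far; infer_instance

lemma far_of {a b : Fin 7} (h : (2 : ℤ) ≤ |((b : ℕ) : ℤ) - ((a : ℕ) : ℤ)|) : far a b := by
  rcases abs_cases (((b : ℕ) : ℤ) - ((a : ℕ) : ℤ)) with ⟨he, _⟩ | ⟨he, _⟩ <;>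
    rw [he] at h <;> unfold far <;> omega

lemma far_irrefl (a : Fin 7) : ¬ far a a := by unfold far; omega

lemma patch :
    ∀ x0 : Fin 7, ∀ x1 : Fin 7, far x0 x1 → ∀ x2 : Fin 7, far x0 x2 → far x1 x2 → ∀ x3 : Fin 7, x3 ≠ x0 → x3 ≠ x1 → far x2 x3 → ∀ x4 : Fin 7, x4 ≠ x0 → far x1 x4 → far x2 x4 → ∀ x5 : Fin 7, x5 ≠ x0 → x5 ≠ x1 → far x2 x5 → far x3 x5 → far x4 x5 → ∀ x6 : Fin 7, x6 ≠ x1 → x6 ≠ x2 → x6 ≠ x3 → far x4 x6 → far x5 x6 → ∀ x7 : Fin 7, x7 ≠ x2 → x7 ≠ x3 → x7 ≠ x4 → far x5 x7 → far x6 x7 →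
    x4 = x3 := by decide

lemma diag0 {m n : ℕ} (f : ZMod m × ZMod n → Fin 7)
    (hA : ∀ (i : ZMod m) (j : ZMod n), far (f (i, j)) (f (i + 1, j)))
    (hB : ∀ (i : ZMod m) (j : ZMod n), far (f (i, j)) (f (i, j + 1)))
    (hC : ∀ (i : ZMod m) (j : ZMod n), far (f (i, j)) (f (i + 1, j + 1)))
    (hD : ∀ (i : ZMod m) (j : ZMod n), f (i + 2, j) ≠ f (i, j))
    (hE : ∀ (i : ZMod m) (j : ZMod n), f (i, j + 2) ≠ f (i, j))
    (hF : ∀ (i : ZMod m) (j : ZMod n), f (i + 2, j + 1) ≠ f (i, j))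
    (hG : ∀ (i : ZMod m) (j : ZMod n), f (i + 1, j + 2) ≠ f (i, j))
    (hH : ∀ (i : ZMod m) (j : ZMod n), f (i + 2, j + 2) ≠ f (i, j)) :
    ∀ (i : ZMod m) (j : ZMod n), f (i + 2, j + 1) = f (i + 1, j + 2) := by
  intro i j
  have c0 := hA (i) (j)
  have c1 := hC (i) (j)
  have c2 := hB (i + 1) (j)
  have c3 := hG (i) (j)
  have c4 := hE (i + 1) (j)
  have c5 := hB (i + 1) (j + 1)
  rw [show (j + 1) + 1 = j + 2 by ring] at c5
  have c6 := hF (i) (j)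
  have c7 := hC (i + 1) (j)
  rw [show (i + 1) + 1 = i + 2 by ring] at c7
  have c8 := hA (i + 1) (j + 1)
  rw [show (i + 1) + 1 = i + 2 by ring] at c8
  have c9 := hH (i) (j)
  have c10 := hG (i + 1) (j)
  rw [show (i + 1) + 1 = i + 2 by ring] at c10
  have c11 := hC (i + 1) (j + 1)
  rw [show (i + 1) + 1 = i + 2 by ring, show (j + 1) + 1 = j + 2 by ring] at c11
  have c12 := hA (i + 1) (j + 2)
  rw [show (i + 1) + 1 = i + 2 by ring] at c12
  have c13 := hB (i + 2) (j + 1)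
  rw [show (j + 1) + 1 = j + 2 by ring] at c13
  have c14 := hH (i + 1) (j)
  rw [show (i + 1) + 2 = i + 3 by ring] at c14
  have c15 := hF (i + 1) (j + 1)
  rw [show (i + 1) + 2 = i + 3 by ring, show (j + 1) + 1 = j + 2 by ring] at c15
  have c16 := hD (i + 1) (j + 2)
  rw [show (i + 1) + 2 = i + 3 by ring] at c16
  have c17 := hC (i + 2) (j + 1)
  rw [show (i + 2) + 1 = i + 3 by ring, show (j + 1) + 1 = j + 2 by ring] at c17
  have c18 := hA (i + 2) (j + 2)
  rw [show (i + 2) + 1 = i + 3 by ring] at c18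
  have c19 := hH (i + 1) (j + 1)
  rw [show (i + 1) + 2 = i + 3 by ring, show (j + 1) + 2 = j + 3 by ring] at c19
  have c20 := hF (i + 1) (j + 2)
  rw [show (i + 1) + 2 = i + 3 by ring, show (j + 2) + 1 = j + 3 by ring] at c20
  have c21 := hG (i + 2) (j + 1)
  rw [show (i + 2) + 1 = i + 3 by ring, show (j + 1) + 2 = j + 3 by ring] at c21
  have c22 := hC (i + 2) (j + 2)
  rw [show (i + 2) + 1 = i + 3 by ring, show (j + 2) + 1 = j + 3 by ring] at c22
  have c23 := hB (i + 3) (j + 2)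
  rw [show (j + 2) + 1 = j + 3 by ring] at c23
  exact patch (f (i, j)) (f (i + 1, j)) c0 (f (i + 1, j + 1)) c1 c2 (f (i + 1, j + 2)) c3 c4 c5 (f (i + 2, j + 1)) c6 c7 c8 (f (i + 2, j + 2)) c9 c10 c11 c12 c13 (f (i + 3, j + 2)) c14 c15 c16 c17 c18 (f (i + 3, j + 3)) c19 c20 c21 c22 c23
lemma oneD :
    ∀ a0 : Fin 7, ∀ a1 : Fin 7, far a0 a1 → ∀ a2 : Fin 7, far a0 a2 → far a1 a2 → ∀ a3 : Fin 7, a3 ≠ a0 → far a1 a3 → far a2 a3 → ∀ a4 : Fin 7, a4 ≠ a0 → a4 ≠ a1 → far a2 a4 → far a3 a4 → ∀ a5 : Fin 7, a5 ≠ a1 → a5 ≠ a2 → far a3 a5 → far a4 a5 → ∀ a6 : Fin 7, a6 ≠ a2 → a6 ≠ a3 → far a4 a6 → far a5 a6 → ∀ a7 : Fin 7, a7 ≠ a3 → a7 ≠ a4 → far a5 a7 → far a6 a7 → ∀ a8 : Fin 7, a8 ≠ a4 → a8 ≠ a5 → far a6 a8 → far a7 a8 → ∀ a9 : Fin 7,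 a9 ≠ a5 → a9 ≠ a6 → far a7 a9 → far a8 a9 → ∀ a10 : Fin 7, a10 ≠ a6 → a10 ≠ a7 → far a8 a10 → far a9 a10 → ∀ a11 : Fin 7, a11 ≠ a7 → a11 ≠ a8 → far a9 a11 → far a10 a11 → ∀ a12 : Fin 7, a12 ≠ a8 → a12 ≠ a9 → far a10 a12 → far a11 a12 → ∀ a13 : Fin 7, a13 ≠ a9 → a13 ≠ a10 → far a11 a13 → far a12 a13 →
    a10 = a3 := by decide

lemma per' {d : ℕ} (h : ZMod d → Fin 7)
    (c1 : ∀ k, far (h k) (h (k + 1)))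
    (c2 : ∀ k, far (h k) (h (k + 2)))
    (c3 : ∀ k, h (k + 3) ≠ h k)
    (c4 : ∀ k, h (k + 4) ≠ h k) :
    ∀ b : ZMod d, h (b + 10) = h (b + 3) := by
  intro b
  have t0 := c1 (b)
  have t1 := c2 (b)
  have t2 := c1 (b + 1)
  rw [show (b + 1) + 1 = b + 2 by ring] at t2
  have t3 := c3 (b)
  have t4 := c2 (b + 1)
  rw [show (b + 1) + 2 = b + 3 by ring] at t4
  have t5 := c1 (b + 2)
  rw [show (b + 2) + 1 = b + 3 by ring] at t5
  have t6 := c4 (b)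
  have t7 := c3 (b + 1)
  rw [show (b + 1) + 3 = b + 4 by ring] at t7
  have t8 := c2 (b + 2)
  rw [show (b + 2) + 2 = b + 4 by ring] at t8
  have t9 := c1 (b + 3)
  rw [show (b + 3) + 1 = b + 4 by ring] at t9
  have t10 := c4 (b + 1)
  rw [show (b + 1) + 4 = b + 5 by ring] at t10
  have t11 := c3 (b + 2)
  rw [show (b + 2) + 3 = b + 5 by ring] at t11
  have t12 := c2 (b + 3)
  rw [show (b + 3) + 2 = b + 5 by ring] at t12
  have t13 := c1 (b + 4)
  rw [show (b + 4) + 1 = b + 5 by ring] at t13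
  have t14 := c4 (b + 2)
  rw [show (b + 2) + 4 = b + 6 by ring] at t14
  have t15 := c3 (b + 3)
  rw [show (b + 3) + 3 = b + 6 by ring] at t15
  have t16 := c2 (b + 4)
  rw [show (b + 4) + 2 = b + 6 by ring] at t16
  have t17 := c1 (b + 5)
  rw [show (b + 5) + 1 = b + 6 by ring] at t17
  have t18 := c4 (b + 3)
  rw [show (b + 3) + 4 = b + 7 by ring] at t18
  have t19 := c3 (b + 4)
  rw [show (b + 4) + 3 = b + 7 by ring] at t19
  have t20 := c2 (b + 5)
  rw [show (b + 5) + 2 = b + 7 by ring] at t20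
  have t21 := c1 (b + 6)
  rw [show (b + 6) + 1 = b + 7 by ring] at t21
  have t22 := c4 (b + 4)
  rw [show (b + 4) + 4 = b + 8 by ring] at t22
  have t23 := c3 (b + 5)
  rw [show (b + 5) + 3 = b + 8 by ring] at t23
  have t24 := c2 (b + 6)
  rw [show (b + 6) + 2 = b + 8 by ring] at t24
  have t25 := c1 (b + 7)
  rw [show (b + 7) + 1 = b + 8 by ring] at t25
  have t26 := c4 (b + 5)
  rw [show (b + 5) + 4 = b + 9 by ring] at t26
  have t27 := c3 (b + 6)
  rw [show (b + 6) + 3 = b + 9 by ring] at t27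
  have t28 := c2 (b + 7)
  rw [show (b + 7) + 2 = b + 9 by ring] at t28
  have t29 := c1 (b + 8)
  rw [show (b + 8) + 1 = b + 9 by ring] at t29
  have t30 := c4 (b + 6)
  rw [show (b + 6) + 4 = b + 10 by ring] at t30
  have t31 := c3 (b + 7)
  rw [show (b + 7) + 3 = b + 10 by ring] at t31
  have t32 := c2 (b + 8)
  rw [show (b + 8) + 2 = b + 10 by ring] at t32
  have t33 := c1 (b + 9)
  rw [show (b + 9) + 1 = b + 10 by ring] at t33
  have t34 := c4 (b + 7)
  rw [show (b + 7) + 4 = b + 11 by ring] at t34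
  have t35 := c3 (b + 8)
  rw [show (b + 8) + 3 = b + 11 by ring] at t35
  have t36 := c2 (b + 9)
  rw [show (b + 9) + 2 = b + 11 by ring] at t36
  have t37 := c1 (b + 10)
  rw [show (b + 10) + 1 = b + 11 by ring] at t37
  have t38 := c4 (b + 8)
  rw [show (b + 8) + 4 = b + 12 by ring] at t38
  have t39 := c3 (b + 9)
  rw [show (b + 9) + 3 = b + 12 by ring] at t39
  have t40 := c2 (b + 10)
  rw [show (b + 10) + 2 = b + 12 by ring] at t40
  have t41 := c1 (b + 11)
  rw [show (b + 11) + 1 = b + 12 by ring] at t41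
  have t42 := c4 (b + 9)
  rw [show (b + 9) + 4 = b + 13 by ring] at t42
  have t43 := c3 (b + 10)
  rw [show (b + 10) + 3 = b + 13 by ring] at t43
  have t44 := c2 (b + 11)
  rw [show (b + 11) + 2 = b + 13 by ring] at t44
  have t45 := c1 (b + 12)
  rw [show (b + 12) + 1 = b + 13 by ring] at t45
  exact oneD (h (b)) (h (b + 1)) t0 (h (b + 2)) t1 t2 (h (b + 3)) t3 t4 t5 (h (b + 4)) t6 t7 t8 t9 (h (b + 5)) t10 t11 t12 t13 (h (b + 6)) t14 t15 t16 t17 (h (b + 7)) t18 t19 t20 t21 (h (b + 8)) t22 t23 t24 t25 (h (b + 9)) t26 t27 t28 t29 (h (b + 10)) t30 t31 t32 t33 (h (b + 11)) t34 t35 t36 t37 (h (b + 12)) t38 t39 t40 t41 (h (b + 13)) t42 t43 t44 t45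

lemma cyc {d : ℕ} (h : ZMod d → Fin 7)
    (c1 : ∀ k, far (h k) (h (k + 1)))
    (c2 : ∀ k, far (h k) (h (k + 2)))
    (c3 : ∀ k, h (k + 3) ≠ h k)
    (c4 : ∀ k, h (k + 4) ≠ h k) : 7 ∣ d := by
  by_contra hd
  have hper : ∀ k : ZMod d, h (k + 7) = h k := by
    intro k
    have := per' h c1 c2 c3 c4 (k - 3)
    rw [show k - 3 + 10 = k + 7 by ring, show k - 3 + 3 = k by ring] at this
    exact this
  have hdz : NeZero d := ⟨fun h0 => hd (h0 ▸ dvd_zero 7)⟩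
  have cop : Nat.Coprime 7 d := (Nat.Prime.coprime_iff_not_dvd (by norm_num)).mpr hd
  have step : ∀ (c : ℕ) (x : ZMod d), h (x + 7 * (c : ZMod d)) = h x := by
    intro c
    induction c with
    | zero => intro x; simp
    | succ n ih =>
        intro x
        have e : x + 7 * ((n + 1 : ℕ) : ZMod d) = (x + 7) + 7 * ((n : ℕ) : ZMod d) := by
          push_cast; ring
        rw [e, ih, hper]
  set u := ZMod.unitOfCoprime 7 cop with hu
  have h7u : (7 : ZMod d) * ((u⁻¹ : (ZMod d)ˣ) : ZMod d) = 1 := by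
    have := u.mul_inv
    rwa [hu, show ((ZMod.unitOfCoprime 7 cop : (ZMod d)ˣ) : ZMod d) = (7 : ZMod d) by
      rw [ZMod.coe_unitOfCoprime]; norm_num] at this
  have hcon : ∀ x : ZMod d, h (x + 1) = h x := by
    intro x
    have hv : ((((u⁻¹ : (ZMod d)ˣ) : ZMod d)).val : ZMod d)
        = ((u⁻¹ : (ZMod d)ˣ) : ZMod d) := ZMod.natCast_rightInverse _
    have h1x : h (x + 7 * ((u⁻¹ : (ZMod d)ˣ) : ZMod d)) = h x := by
      rw [← hv]; exact step _ x
    rwa [h7u] at h1x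
  have := c1 0
  rw [hcon 0] at this
  exact far_irrefl _ this

theorem stmt_12 (m n : ℕ) (hm : 48 ≤ m) (hn : 48 ≤ n)
    (h7 : ¬(7 ∣ m ∧ 7 ∣ n)) :
    ¬ ∃ f : ZMod m × ZMod n → Fin 7,
      (∀ i : ZMod m, ∀ j : ZMod n,
        ∀ ab : ZMod m × ZMod n, ab ∈ [((1 : ZMod m), (0 : ZMod n)), (0, 1), (1, 1)] →
          (2 : ℤ) ≤ |((f (i + ab.1, j + ab.2) : ℕ) : ℤ) - ((f (i, j) : ℕ) : ℤ)|) ∧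
      (∀ i : ZMod m, ∀ j : ZMod n,
        ∀ ab : ZMod m × ZMod n,
          ab ∈ [((2 : ZMod m), (0 : ZMod n)), (0, 2), (2, 1), (1, 2), (2, 2)] →
          f (i + ab.1, j + ab.2) ≠ f (i, j)) := by
  rintro ⟨f, h1, h2⟩
  have hA : ∀ (i : ZMod m) (j : ZMod n), far (f (i, j)) (f (i + 1, j)) := fun i j => by
    simpa using far_of (h1 i j (1, 0) (by simp))
  have hB : ∀ (i : ZMod m) (j : ZMod n), far (f (i, j)) (f (i, j + 1)) := fun i j => by
    simpa using far_of (h1 i j (0, 1) (by simp))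
  have hC : ∀ (i : ZMod m) (j : ZMod n), far (f (i, j)) (f (i + 1, j + 1)) := fun i j => by
    simpa using far_of (h1 i j (1, 1) (by simp))
  have hD : ∀ (i : ZMod m) (j : ZMod n), f (i + 2, j) ≠ f (i, j) := fun i j => by
    simpa using h2 i j (2, 0) (by simp)
  have hE : ∀ (i : ZMod m) (j : ZMod n), f (i, j + 2) ≠ f (i, j) := fun i j => by
    simpa using h2 i j (0, 2) (by simp)
  have hF : ∀ (i : ZMod m) (j : ZMod n), f (i + 2, j + 1) ≠ f (i, j) := fun i j => by
    simpa using h2 i j (2, 1) (by simp)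
  have hG : ∀ (i : ZMod m) (j : ZMod n), f (i + 1, j + 2) ≠ f (i, j) := fun i j => by
    simpa using h2 i j (1, 2) (by simp)
  have hH : ∀ (i : ZMod m) (j : ZMod n), f (i + 2, j + 2) ≠ f (i, j) := fun i j => by
    simpa using h2 i j (2, 2) (by simp)
  have diag0' := diag0 f hA hB hC hD hE hF hG hH
  -- diagonality in convenient form
  have diag : ∀ (i : ZMod m) (j : ZMod n), f (i + 1, j) = f (i, j + 1) := by
    intro i j
    have := diag0' (i - 1) (j - 1)
    rw [show i - 1 + 2 = i + 1 by ring, show j - 1 + 1 = j by ring,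
      show i - 1 + 1 = i by ring, show j - 1 + 2 = j + 1 by ring] at this
    exact this
  -- rows
  have hrow : (7 : ℕ) ∣ m := by
    apply cyc (fun i : ZMod m => f (i, 0))
    · exact fun k => hA k 0
    · intro k
      have hd1 := diag (k + 1) 0
      rw [show (k : ZMod m) + 1 + 1 = k + 2 by ring] at hd1
      have hx := hC k 0
      rw [← hd1] at hx
      exact hx
    · intro k
      have hd1 := diag (k + 2) 0
      rw [show (k : ZMod m) + 2 + 1 = k + 3 by ring] at hd1
      have hd2 := diag (k + 1) (0 + 1)
      rw [show (k : ZMod m) + 1 + 1 = k + 2 by ring,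
        show ((0 : ZMod n) + 1) + 1 = 0 + 2 by ring] at hd2
      have hx := hG k 0
      rw [← hd2, ← hd1] at hx
      exact hx
    · intro k
      have hd1 := diag (k + 3) 0
      rw [show (k : ZMod m) + 3 + 1 = k + 4 by ring] at hd1
      have hd2 := diag (k + 2) (0 + 1)
      rw [show (k : ZMod m) + 2 + 1 = k + 3 by ring,
        show ((0 : ZMod n) + 1) + 1 = 0 + 2 by ring] at hd2
      have hx := hH k 0
      rw [← hd2, ← hd1] at hx
      exact hx
  have hcol : (7 : ℕ) ∣ n := by
    apply cyc (fun j : ZMod n => f (0, j))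
    · exact fun k => hB 0 k
    · intro k
      have hd1 := diag 0 (k + 1)
      rw [show (k : ZMod n) + 1 + 1 = k + 2 by ring] at hd1
      have hx := hC 0 k
      rw [hd1] at hx
      exact hx
    · intro k
      have hd2 := diag (0 + 1) (k + 1)
      rw [show ((0 : ZMod m) + 1) + 1 = 0 + 2 by ring,
        show (k : ZMod n) + 1 + 1 = k + 2 by ring] at hd2
      have hd1 := diag 0 (k + 2)
      rw [show (k : ZMod n) + 2 + 1 = k + 3 by ring] at hd1
      have hx := hF 0 k
      rw [hd2, hd1] at hx
      exact hx
    · intro k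
      have hd2 := diag (0 + 1) (k + 2)
      rw [show ((0 : ZMod m) + 1) + 1 = 0 + 2 by ring,
        show (k : ZMod n) + 2 + 1 = k + 3 by ring] at hd2
      have hd1 := diag 0 (k + 3)
      rw [show (k : ZMod n) + 3 + 1 = k + 4 by ring] at hd1
      have hx := hH 0 k
      rw [hd2, hd1] at hx
      exact hx
  exact h7 ⟨hrow, hcol⟩
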